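/- Let L > 0, q, H > 0, let n ≥ 1 be an integer and ρ ∈ ℝ, and set z_n(x) = γ + (q/(2H))·x(x − L) + ρ·sin(nπx/L) and C_n* = (q/H)·(L/(nπ))². Then there exists x ∈ (0, L) with z_n''(x) < 0 if and only if either (n = 1 and ρ > C_1*) or (n ≥ 2 and |ρ| > C_n*). -/

import Mathlib

open Real

/-- For `z_n(x) = γ + (q/(2H)) x(x − L) + ρ sin(nπx/L)` and
`C_n* = (q/H)(L/(nπ))²`, there is `x ∈ (0, L)` with `z_n''(x) < 0` iff
(`n = 1` and `ρ > C_1*`) or (`n ≥ 2` and `|ρ| > C_n*`). -/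
theorem slackening_threshold (L q H γ : ℝ) (hL : 0 < L) (hq : 0 < q) (hH : 0 < H)
    (n : ℕ) (hn : 1 ≤ n) (ρ : ℝ) :
    (∃ x ∈ Set.Ioo (0:ℝ) L,
        deriv (deriv (fun x : ℝ =>
          γ + (q / (2 * H)) * x * (x - L) + ρ * Real.sin ((n : ℝ) * π * x / L))) x < 0)
      ↔ ((n = 1 ∧ (q / H) * (L / ((n : ℝ) * π)) ^ 2 < ρ) ∨
         (2 ≤ n ∧ (q / H) * (L / ((n : ℝ) * π)) ^ 2 < |ρ|)) := by
  have hπ : 0 < π := Real.pi_pos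
  have hn0 : (0:ℝ) < (n:ℝ) := by exact_mod_cast hn.trans_lt' (by norm_num)
  have hL0 : L ≠ 0 := ne_of_gt hL
  have hH0 : H ≠ 0 := ne_of_gt hH
  set k : ℝ := (n:ℝ) * π / L with hkdef
  have hk : 0 < k := by positivity
  set C : ℝ := (q / H) * (L / ((n : ℝ) * π)) ^ 2 with hCdef
  have hC0 : 0 < C := by rw [hCdef]; positivity
  clear_value k C
  have hCk : C * k ^ 2 = q / H := by
    rw [hCdef, hkdef]
    field_simp
  have harg : ∀ x : ℝ, (n : ℝ) * π * x / L = k * x := by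
    intro x; rw [hkdef]; ring
  simp only [harg]
  -- first derivative
  have A : ∀ z : ℝ, HasDerivAt
      (fun x : ℝ => γ + (q / (2 * H)) * x * (x - L) + ρ * Real.sin (k * x))
      ((q / (2 * H)) * (2 * z - L) + ρ * k * Real.cos (k * z)) z := by
    intro z
    have hraw := ((((hasDerivAt_id z).const_mul (q / (2 * H))).mul
        ((hasDerivAt_id z).sub_const L)).const_add γ).add
      ((((hasDerivAt_id z).const_mul k).sin).const_mul ρ)
    simp only [id_eq] at hraw
    exact hraw.congr_deriv (by ring)
  have hd1 : deriv (fun x : ℝ =>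
      γ + (q / (2 * H)) * x * (x - L) + ρ * Real.sin (k * x))
      = fun z => (q / (2 * H)) * (2 * z - L) + ρ * k * Real.cos (k * z) :=
    funext fun z => (A z).deriv
  have B : ∀ y : ℝ, HasDerivAt
      (fun z : ℝ => (q / (2 * H)) * (2 * z - L) + ρ * k * Real.cos (k * z))
      (q / H - ρ * k ^ 2 * Real.sin (k * y)) y := by
    intro y
    have hraw := ((((hasDerivAt_id y).const_mul 2).sub_const L).const_mul
        (q / (2 * H))).add ((((hasDerivAt_id y).const_mul k).cos).const_mul (ρ * k))
    simp only [id_eq] at hraw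
    exact hraw.congr_deriv (by ring)
  have hderiv : ∀ x : ℝ, deriv (deriv (fun x : ℝ =>
      γ + (q / (2 * H)) * x * (x - L) + ρ * Real.sin (k * x))) x
      = q / H - ρ * k ^ 2 * Real.sin (k * x) := by
    intro x
    rw [hd1, (B x).deriv]
  simp only [hderiv]
  have hk2 : (0:ℝ) < k ^ 2 := by positivity
  constructor
  · rintro ⟨x, ⟨hx0, hxL⟩, hlt⟩
    have hs : C < ρ * Real.sin (k * x) := by nlinarith [hCk]
    have habs : C < |ρ| := by
      have h1 : ρ * Real.sin (k * x) ≤ |ρ| := by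
        calc ρ * Real.sin (k * x) ≤ |ρ * Real.sin (k * x)| := le_abs_self _
          _ = |ρ| * |Real.sin (k * x)| := abs_mul _ _
          _ ≤ |ρ| * 1 := by
              gcongr
              exact abs_le.mpr ⟨Real.neg_one_le_sin _, Real.sin_le_one _⟩
          _ = |ρ| := mul_one _
      linarith
    by_cases h1 : n = 1
    · left
      refine ⟨h1, ?_⟩
      have hkx0 : 0 < k * x := mul_pos hk hx0
      have hkL : k * L = π := by rw [hkdef, h1]; push_cast; field_simp
      have hkxπ : k * x < π := by
        calc k * x < k * L := by exact mul_lt_mul_of_pos_left hxL hk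
          _ = π := hkL
      have hsin0 : 0 < Real.sin (k * x) := Real.sin_pos_of_pos_of_lt_pi hkx0 hkxπ
      have hsin1 : Real.sin (k * x) ≤ 1 := Real.sin_le_one _
      nlinarith [hs, hC0, hsin0, hsin1]
    · right
      exact ⟨by omega, habs⟩
  · rintro (⟨h1, hρ⟩ | ⟨h2, hρ⟩)
    · refine ⟨L / 2, ⟨by linarith, by linarith⟩, ?_⟩
      have harg1 : k * (L / 2) = π / 2 := by
        rw [hkdef, h1]; push_cast; field_simp
      rw [harg1, Real.sin_pi_div_two]
      nlinarith [hCk]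
    · have hn2 : (2:ℝ) ≤ (n:ℝ) := by exact_mod_cast h2
      rcases lt_abs.mp hρ with h | h
      · refine ⟨L / (2 * n), ⟨by positivity, ?_⟩, ?_⟩
        · rw [div_lt_iff₀ (by positivity)]
          nlinarith
        · have harg1 : k * (L / (2 * n)) = π / 2 := by
            rw [hkdef]; field_simp
          rw [harg1, Real.sin_pi_div_two]
          nlinarith [hCk]
      · refine ⟨3 * L / (2 * n), ⟨by positivity, ?_⟩, ?_⟩
        · rw [div_lt_iff₀ (by positivity)]
          nlinarith
        · have harg1 : k * (3 * L / (2 * n)) = π + π / 2 := by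
            rw [hkdef]; field_simp; ring
          have hsin : Real.sin (π + π / 2) = -1 := by
            rw [Real.sin_add]; simp
          rw [harg1, hsin]
          have h3 : C * k ^ 2 < -ρ * k ^ 2 := by
            apply mul_lt_mul_of_pos_right h hk2
          linarith
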